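/- (Correctness of the SEU pruning strategy) Let D be a finite set of sequences with positive per-position utilities, and let i be an item with SEU(i) := Σ_{s ∈ seq(i)} u(s, s) < minutil, where seq(i) is the set of sequences containing i and u(s,s) is the total utility of s. Then every sequence pattern s' that contains item i satisfies u(s') := Σ_{s ∈ D} u(s', s) < minutil, where u(s', s) is the maximum utility over occurrences of s' in s (taken as 0 if s' does not occur in s). -/

import Mathlib

attribute [local instance] Classical.propDecidable

noncomputable section

abbrev Item := ℕ
/-- A sequence: each position carries an item and its (per-position) utility. -/
abbrev Seqc := List (Item × ℚ)

/-- All per-position utilities of `s` are strictly positive. -/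
def PosUtil (s : Seqc) : Prop := ∀ p ∈ s, 0 < p.2

/-- `O` is an occurrence of the pattern `s'` in the sequence `s`:
a strictly increasing list of indices of `s` whose items match `s'` in order. -/
def IsOcc (s' : List Item) (s : Seqc) (O : List ℕ) : Prop :=
  O.Chain' (· < ·) ∧ (∀ j ∈ O, j < s.length) ∧
    O.map (fun j => (s.getD j (0, 0)).1) = s'

/-- The utility of an occurrence: the sum of utilities of `s` at the chosen indices. -/
def occUtil (s : Seqc) (O : List ℕ) : ℚ :=
  (O.map (fun j => (s.getD j (0, 0)).2)).sum

/-- The total utility of a sequence. -/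
def totalUtil (s : Seqc) : ℚ := (s.map Prod.snd).sum

/-- The (finite) set of all occurrences of `s'` in `s`. -/
def Occs (s' : List Item) (s : Seqc) : Finset (List ℕ) :=
  ((List.range s.length).sublists.filter
     (fun O => O.map (fun j => (s.getD j (0, 0)).1) = s')).toFinset

/-- `u(s', s)`: the maximum occurrence utility of `s'` in `s` (0 if no occurrence). -/
def patUtil (s' : List Item) (s : Seqc) : ℚ :=
  (((Occs s' s).image (fun O => occUtil s O)).max).unbotD 0

/-- `u(s')`: the total utility of pattern `s'` in the database `D`. -/
def dbUtil (s' : List Item) (D : List Seqc) : ℚ :=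
  (D.map (patUtil s')).sum

/-- `s'` occurs in `s` (as a subsequence of the item sequence). -/
def Occurs (s' : List Item) (s : Seqc) : Prop := s'.Sublist (s.map Prod.fst)

/-- Support of a pattern in a database. -/
def supp (s' : List Item) (D : List Seqc) : ℕ :=
  (D.filter (fun s => Occurs s' s)).length

/-- Remaining utility of the item at position `k` in `s`. -/
def RU (s : Seqc) (k : ℕ) : ℚ := ((s.drop k).map Prod.snd).sum

/-- Maximum utility of item `i` among positions of `t` (0 if `i` does not occur). -/
def itemMaxUtil (i : Item) (t : Seqc) : ℚ :=
  (((t.filter (fun p => p.1 = i)).map Prod.snd).maximum).unbotD 0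

/-- Reduced remaining utility of the item at position `k` in `s`. -/
def RRU (s : Seqc) (k : ℕ) : ℚ :=
  (s.getD k (0, 0)).2 +
    ∑ i ∈ ((s.drop (k + 1)).map Prod.fst).toFinset, itemMaxUtil i (s.drop (k + 1))

/-- `p` is an extension position of item `i` for pattern `sp` in sequence `s`. -/
def IsExtPos (sp : List Item) (i : Item) (s : Seqc) (p : ℕ) : Prop :=
  p < s.length ∧ (s.getD p (0, 0)).1 = i ∧
    ∃ O, IsOcc sp s O ∧ ∀ j ∈ O, j < p

/-- Maximum utility of `sp` among its occurrences lying strictly before position `p`. -/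
def patUtilBefore (sp : List Item) (s : Seqc) (p : ℕ) : ℚ :=
  ((((Occs sp s).filter (fun O => ∀ j ∈ O, j < p)).image
      (fun O => occUtil s O)).max).unbotD 0

/-- Per-sequence bound used in RRS: max over extension positions of
`u(sp, s before e_p) + RRU(e_p, s)` (0 if no extension position). -/
def seqRRSBound (sp : List Item) (i : Item) (s : Seqc) : ℚ :=
  ((((Finset.range s.length).filter (IsExtPos sp i s)).image
      (fun p => patUtilBefore sp s p + RRU s p)).max).unbotD 0

/-- Reduced remaining utility of sequence `sp` with extension item `i` in database `D`. -/
def RRS (sp : List Item) (i : Item) (D : List Seqc) : ℚ :=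
  (D.map (seqRRSBound sp i)).sum

/-- `SEU(i)`: sum of the total utilities of all database sequences containing item `i`. -/
def SEU (i : Item) (D : List Seqc) : ℚ :=
  ((D.filter (fun s => i ∈ s.map Prod.fst)).map totalUtil).sum

end

lemma sublist_sum_le {l' l : List ℚ} (h : l'.Sublist l) (hn : ∀ x ∈ l, 0 ≤ x) :
    l'.sum ≤ l.sum := by
  induction h with
  | slnil => simp
  | cons a h ih =>
    have h0 := hn a (by simp)
    have := ih (fun x hx => hn x (by simp [hx]))
    simp only [List.sum_cons]; linarith
  | cons_cons a h ih =>
    have := ih (fun x hx => hn x (by simp [hx]))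
    simp only [List.sum_cons]; linarith

lemma range_map_getD (s : Seqc) :
    (List.range s.length).map (fun j => s.getD j (0, 0)) = s := by
  apply List.ext_getElem
  · simp
  · intro n h1 h2
    simp [List.getD_eq_getElem?_getD, List.getElem?_eq_getElem h2]

lemma mem_occs {s' : List Item} {s : Seqc} {O : List ℕ} (hO : O ∈ Occs s' s) :
    O.Sublist (List.range s.length) ∧ O.map (fun j => (s.getD j (0, 0)).1) = s' := by
  simp only [Occs, List.mem_toFinset, List.mem_filter, List.mem_sublists,
    decide_eq_true_eq] at hO
  exact hO

lemma totalUtil_nonneg {s : Seqc} (hpos : PosUtil s) : 0 ≤ totalUtil s := by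
  apply List.sum_nonneg
  intro x hx
  rcases List.mem_map.1 hx with ⟨p, hp, rfl⟩
  exact (hpos p hp).le

lemma patUtil_le_totalUtil (s' : List Item) {s : Seqc} (hpos : PosUtil s) :
    patUtil s' s ≤ totalUtil s := by
  have hb : ∀ O ∈ Occs s' s, occUtil s O ≤ totalUtil s := by
    intro O hO
    obtain ⟨hsub, -⟩ := mem_occs hO
    have h1 : (O.map (fun j => (s.getD j (0, 0)).2)).Sublist
        ((List.range s.length).map (fun j => (s.getD j (0, 0)).2)) :=
      hsub.map _
    have h2 : (List.range s.length).map (fun j => (s.getD j (0, 0)).2)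
        = s.map Prod.snd := by
      conv_rhs => rw [← range_map_getD s]
      rw [List.map_map]
      rfl
    rw [h2] at h1
    refine sublist_sum_le h1 ?_
    intro x hx
    rcases List.mem_map.1 hx with ⟨p, hp, rfl⟩
    exact (hpos p hp).le
  unfold patUtil
  rcases h : ((Occs s' s).image (fun O => occUtil s O)).max with _ | m
  · exact totalUtil_nonneg hpos
  · have hm := Finset.mem_of_max h
    rcases Finset.mem_image.1 hm with ⟨O, hO, rfl⟩
    exact hb O hO

lemma patUtil_eq_zero {s' : List Item} {i : Item} (hi : i ∈ s') {s : Seqc}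
    (h : i ∉ s.map Prod.fst) : patUtil s' s = 0 := by
  have hempty : Occs s' s = ∅ := by
    rw [Finset.eq_empty_iff_forall_notMem]
    intro O hO
    obtain ⟨hsub, hmap⟩ := mem_occs hO
    rw [← hmap] at hi
    rcases List.mem_map.1 hi with ⟨j, hj, hji⟩
    have hjlt : j < s.length := by
      have := hsub.mem hj; simpa [List.mem_range] using this
    apply h
    rw [List.mem_map]
    refine ⟨s.getD j (0, 0), ?_, hji⟩
    rw [List.getD_eq_getElem?_getD, List.getElem?_eq_getElem hjlt]
    simp [List.getElem_mem]
  simp [patUtil, hempty]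

lemma dbUtil_le_SEU {s' : List Item} {i : Item} (hi : i ∈ s') (D : List Seqc)
    (hpos : ∀ s ∈ D, PosUtil s) : dbUtil s' D ≤ SEU i D := by
  induction D with
  | nil => simp [dbUtil, SEU]
  | cons s D ih =>
    have ih' := ih (fun t ht => hpos t (by simp [ht]))
    by_cases h : i ∈ s.map Prod.fst
    · have h1 : patUtil s' s ≤ totalUtil s :=
        patUtil_le_totalUtil s' (hpos s (by simp))
      simp only [dbUtil, SEU, List.map_cons, List.sum_cons, List.filter_cons] at *
      simp only [decide_eq_true_eq, h, if_true, List.map_cons, List.sum_cons]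
      linarith
    · have h1 : patUtil s' s = 0 := patUtil_eq_zero hi h
      simp only [dbUtil, SEU, List.map_cons, List.sum_cons, List.filter_cons] at *
      simp only [decide_eq_true_eq, h, if_false]
      linarith

/-- correctness of the SEU pruning strategy: if `SEU(i) < minutil`,
then every pattern containing item `i` has database utility below `minutil`. -/
theorem seu_pruning (D : List Seqc) (i : Item) (minutil : ℚ)
    (hpos : ∀ s ∈ D, PosUtil s)
    (hseu : SEU i D < minutil) :
    ∀ s' : List Item, i ∈ s' → dbUtil s' D < minutil := by
  intro s' hi
  exact lt_of_le_of_lt (dbUtil_le_SEU hi D hpos) hseu
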